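/- Let F be a field, a ∈ F an element of multiplicative order ℓ (a^ℓ = 1 and a^j ≠ 1 for all 0 < j < ℓ), K a subfield of F, s, t natural numbers, x : Fin s → F, and w : Fin s → F (a multiplier constant on each orbit). Then the following two subsets of (Fin s → F) are equal: { v | (∀ i, v i ∈ K) and ∀ f ∈ F[X], natDegree(f) ≤ t·ℓ → ∑_{i ∈ Fin s} ∑_{j ∈ Fin ℓ} (v i) · (w i) · f(a^j · x i) = 0 } = { v | (∀ i, v i ∈ K) and ∀ g ∈ F[X], natDegree(g) ≤ t → ∑_{i ∈ Fin s} (v i) · (w i) · g((x i)^ℓ) = 0 }. In other words, the punctured invariant subcode of the quasi-cyclic alternant code of order t·ℓ + 1 with support (i,j) ↦ a^j · x i and multiplier (i,j) ↦ w i is the alternant code of order t + 1 over K with support i ↦ (x i)^ℓ and multiplier i ↦ w i. -/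
import Mathlib


open Polynomial Finset

private lemma cast_card_ne_zero {F : Type*} [Field F] (a : F)
    (ℓ : ℕ) (hℓ : 0 < ℓ) (ha1 : a ^ ℓ = 1)
    (ha2 : ∀ j : ℕ, 0 < j → j < ℓ → a ^ j ≠ 1) : (ℓ : F) ≠ 0 := by
  intro h
  set p := ringChar F with hp
  have hchar : CharP F p := ringChar.charP F
  have hdvd : p ∣ ℓ := (CharP.cast_eq_zero_iff F p ℓ).mp h
  have hp0 : p ≠ 0 := by
    rintro hp0
    rw [hp0] at hdvd
    exact hℓ.ne' (Nat.eq_zero_of_zero_dvd hdvd)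
  have hprime : p.Prime := ((CharP.char_is_prime_or_zero F p).resolve_right hp0)
  obtain ⟨m, rfl⟩ := hdvd
  have h2 := hprime.two_le
  have hm0 : 0 < m := Nat.pos_of_ne_zero (by rintro rfl; simp at hℓ)
  have hmlt : m < p * m := by nlinarith
  haveI := Fact.mk hprime
  have hz : (a ^ m - 1) ^ p = 0 := by
    rw [sub_pow_char]
    simp [← pow_mul, mul_comm m p, ha1]
  have h3 := pow_eq_zero_iff (n := p) (by omega) |>.mp hz
  exact ha2 m hm0 hmlt (by rwa [sub_eq_zero] at h3)

private lemma geom_sum_pow {F : Type*} [Field F] (a : F)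
    (ℓ : ℕ) (hℓ : 0 < ℓ) (hord : orderOf a = ℓ) (k : ℕ) :
    ∑ j ∈ range ℓ, (a ^ k) ^ j = if ℓ ∣ k then (ℓ : F) else 0 := by
  split_ifs with h
  · have : a ^ k = 1 := orderOf_dvd_iff_pow_eq_one.mp (hord ▸ h)
    simp [this]
  · have hne : a ^ k ≠ 1 := fun hh => h (hord ▸ orderOf_dvd_iff_pow_eq_one.mpr hh)
    rw [geom_sum_eq hne]
    have h1 : (a ^ k) ^ ℓ = 1 := by
      rw [← pow_mul, mul_comm, pow_mul, ← hord, pow_orderOf_eq_one, one_pow]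
    simp [h1]

private lemma sum_eval_orbit {F : Type*} [Field F] (a : F)
    (ℓ : ℕ) (hℓ : 0 < ℓ) (hord : orderOf a = ℓ) (t : ℕ) (f : F[X])
    (hf : f.natDegree ≤ t * ℓ) (c : F) :
    ∑ j ∈ range ℓ, f.eval (a ^ j * c) =
      (ℓ : F) * ∑ m ∈ range (t + 1), f.coeff (m * ℓ) * (c ^ ℓ) ^ m := by
  have hfd : f.natDegree < t * ℓ + 1 := by omega
  have step1 : ∑ j ∈ range ℓ, f.eval (a ^ j * c) =
      ∑ k ∈ range (t * ℓ + 1), f.coeff k * c ^ k * ∑ j ∈ range ℓ, (a ^ k) ^ j := by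
    rw [Finset.sum_congr rfl fun j _ => f.eval_eq_sum_range' hfd _, Finset.sum_comm]
    refine Finset.sum_congr rfl fun k _ => ?_
    rw [Finset.mul_sum]
    refine Finset.sum_congr rfl fun j _ => ?_
    rw [mul_pow, ← pow_mul, mul_comm j k, pow_mul]
    ring
  rw [step1]
  have step2 : ∀ k ∈ range (t * ℓ + 1),
      f.coeff k * c ^ k * ∑ j ∈ range ℓ, (a ^ k) ^ j =
      if ℓ ∣ k then (ℓ : F) * (f.coeff k * c ^ k) else 0 := by
    intro k _
    rw [geom_sum_pow a ℓ hℓ hord k]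
    split_ifs with h <;> ring
  rw [Finset.sum_congr rfl step2, ← Finset.sum_filter]
  have himg : (range (t * ℓ + 1)).filter (fun k => ℓ ∣ k) =
      (range (t + 1)).image (· * ℓ) := by
    ext k
    simp only [Finset.mem_filter, Finset.mem_range, Finset.mem_image, Nat.lt_succ_iff]
    constructor
    · rintro ⟨hk, m, rfl⟩
      exact ⟨m, by nlinarith, by ring⟩
    · rintro ⟨m, hm, rfl⟩
      exact ⟨by nlinarith, m, by ring⟩
  rw [himg, Finset.sum_image (fun m _ n _ h => by
    exact Nat.eq_of_mul_eq_mul_right hℓ h), Finset.mul_sum]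
  refine Finset.sum_congr rfl fun m _ => ?_
  rw [← pow_mul, mul_comm ℓ m]

/-- The punctured invariant subcode of the quasi-cyclic alternant code of order
`t·ℓ + 1` with support `(i,j) ↦ a^j · x i` and multiplier `(i,j) ↦ w i` is the
alternant code of order `t + 1` over the subfield `K` with support
`i ↦ (x i)^ℓ` and multiplier `i ↦ w i`. -/
theorem invariant_alternant_code_homothety {F : Type*} [Field F] (a : F)
    (ℓ : ℕ) (hℓ : 0 < ℓ) (ha1 : a ^ ℓ = 1)
    (ha2 : ∀ j : ℕ, 0 < j → j < ℓ → a ^ j ≠ 1) (K : Subfield F) (s t : ℕ)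
    (x w : Fin s → F) :
    {v : Fin s → F | (∀ i, v i ∈ K) ∧ ∀ f : F[X], f.natDegree ≤ t * ℓ →
        ∑ i : Fin s, ∑ j : Fin ℓ, v i * w i * f.eval (a ^ (j : ℕ) * x i) = 0} =
      {v : Fin s → F | (∀ i, v i ∈ K) ∧ ∀ g : F[X], g.natDegree ≤ t →
        ∑ i : Fin s, v i * w i * g.eval (x i ^ ℓ) = 0} := by
  have hcast : (ℓ : F) ≠ 0 := cast_card_ne_zero a ℓ hℓ ha1 ha2
  have hord : orderOf a = ℓ := by
    rw [orderOf_eq_iff hℓ]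
    exact ⟨ha1, fun m hm hm0 => ha2 m hm0 hm⟩
  ext v
  simp only [Set.mem_setOf_eq]
  constructor
  · rintro ⟨hK, H⟩
    refine ⟨hK, fun g hg => ?_⟩
    set f := g.comp (X ^ ℓ) with hfdef
    have hfd : f.natDegree ≤ t * ℓ := by
      rw [hfdef, natDegree_comp, natDegree_X_pow]
      exact Nat.mul_le_mul_right ℓ hg
    have := H f hfd
    have hev : ∀ (i : Fin s) (j : Fin ℓ),
        f.eval (a ^ (j : ℕ) * x i) = g.eval (x i ^ ℓ) := by
      intro i j
      rw [hfdef, eval_comp, eval_pow, eval_X, mul_pow, ← pow_mul, mul_comm (j : ℕ) ℓ,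
        pow_mul, ha1, one_pow, one_mul]
    rw [Finset.sum_congr rfl (fun i _ => Finset.sum_congr rfl fun j _ => by
      rw [hev i j])] at this
    simp only [Finset.sum_const, Finset.card_univ, Fintype.card_fin, nsmul_eq_mul] at this
    rw [← Finset.mul_sum] at this
    exact (mul_eq_zero.mp this).resolve_left hcast
  · rintro ⟨hK, H⟩
    refine ⟨hK, fun f hf => ?_⟩
    set g : F[X] := ∑ m ∈ range (t + 1), C (f.coeff (m * ℓ)) * X ^ m with hgdef
    have hgd : g.natDegree ≤ t := by
      refine natDegree_sum_le_of_forall_le _ _ fun m hm => ?_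
      calc (C (f.coeff (m * ℓ)) * X ^ m).natDegree ≤ m := by
            exact (natDegree_C_mul_le _ _).trans_eq (natDegree_X_pow m)
        _ ≤ t := by simpa [Nat.lt_succ_iff] using hm
    have hgev : ∀ y : F, g.eval y = ∑ m ∈ range (t + 1), f.coeff (m * ℓ) * y ^ m := by
      intro y
      rw [hgdef]
      simp [eval_finset_sum]
    have key : ∀ i : Fin s, ∑ j : Fin ℓ, v i * w i * f.eval (a ^ (j : ℕ) * x i) =
        (ℓ : F) * (v i * w i * g.eval (x i ^ ℓ)) := by
      intro i
      rw [Fin.sum_univ_eq_sum_range (fun j => v i * w i * f.eval (a ^ j * x i)) ℓ,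
        ← Finset.mul_sum, sum_eval_orbit a ℓ hℓ hord t f hf (x i), hgev]
      ring
    rw [Finset.sum_congr rfl fun i _ => key i, ← Finset.mul_sum, H g hgd, mul_zero]
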